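/- (Asymptotic speed-up factor D.) Let ρ > 0, let D ≥ 1 be an integer, and let (X_{i,j})_{i ≥ 1, 1 ≤ j ≤ D} be an array of independent random variables on a probability space, each exponentially distributed with rate ρ/D. For each integer Θ ≥ 1 define Γ_Θ := min_{1 ≤ j ≤ D} Σ_{i=1}^Θ X_{i,j} and Γ*_Θ := Σ_{i=1}^Θ min_{1 ≤ j ≤ D} X_{i,j}. Then Γ*_Θ / Γ_Θ converges to 1/D almost surely as Θ → ∞. -/

import Mathlib

open MeasureTheory ProbabilityTheory Real Finset Filter Set
open scoped ENNReal NNReal Topology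

lemma exp_pdf_integrand_eq' {r : ℝ} (hr : 0 < r) :
    EqOn (fun x : ℝ => x * (exponentialPDF r x).toReal)
      (fun x : ℝ => r * (x ^ (1:ℝ) * exp (-r * x ^ (1:ℝ)))) (Set.Ioi 0) := by
  intro x hx
  have hx' : (0:ℝ) ≤ x := le_of_lt hx
  simp only
  rw [exponentialPDF_of_nonneg hx', ENNReal.toReal_ofReal (by positivity), rpow_one]
  ring_nf

lemma exp_support' {r : ℝ} :
    Function.support (fun x : ℝ => x * (exponentialPDF r x).toReal) ⊆ Set.Ioi 0 := by
  intro x hx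
  by_contra h
  simp only [Set.mem_Ioi, not_lt] at h
  rcases lt_or_eq_of_le h with h' | h'
  · simp [Function.mem_support, exponentialPDF_of_neg h'] at hx
  · simp [Function.mem_support, ← h'] at hx

lemma exp_integrable' {r : ℝ} (hr : 0 < r) : Integrable (fun x : ℝ => x) (expMeasure r) := by
  have hmeas : Measurable (exponentialPDF r) := (measurable_exponentialPDFReal r).ennreal_ofReal
  rw [expMeasure, gammaMeasure, show gammaPDF 1 r = exponentialPDF r from rfl,
    integrable_withDensity_iff hmeas (ae_of_all _ fun x => ENNReal.ofReal_lt_top)]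
  rw [← integrableOn_iff_integrable_of_support_subset exp_support']
  have key : IntegrableOn (fun x : ℝ => x ^ (1:ℝ) * exp (-r * x ^ (1:ℝ))) (Set.Ioi 0) :=
    integrableOn_rpow_mul_exp_neg_mul_rpow (by norm_num) zero_lt_one hr
  exact IntegrableOn.congr_fun (key.const_mul r) (exp_pdf_integrand_eq' hr).symm measurableSet_Ioi

lemma exp_mean' {r : ℝ} (hr : 0 < r) : ∫ x, x ∂(expMeasure r) = 1 / r := by
  have hmeas : Measurable fun x : ℝ => (exponentialPDFReal r x).toNNReal :=
    (measurable_exponentialPDFReal r).real_toNNReal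
  have h1 : expMeasure r = volume.withDensity (fun x => ((exponentialPDFReal r x).toNNReal : ℝ≥0∞)) := rfl
  rw [h1, integral_withDensity_eq_integral_smul hmeas]
  have h2 : ∀ x, (exponentialPDFReal r x).toNNReal • x = x * (exponentialPDF r x).toReal := by
    intro x
    have hnn := exponentialPDFReal_nonneg hr x
    simp [NNReal.smul_def, Real.coe_toNNReal _ hnn, exponentialPDF, ENNReal.toReal_ofReal hnn,
      mul_comm]
  simp_rw [h2]
  rw [← setIntegral_eq_integral_of_forall_compl_eq_zero (s := Set.Ioi 0)
    (fun x hx => Function.notMem_support.mp (fun hs => hx (exp_support' hs)))]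
  rw [setIntegral_congr_fun measurableSet_Ioi (exp_pdf_integrand_eq' hr)]
  rw [integral_const_mul]
  have := integral_rpow_mul_exp_neg_mul_Ioi (a := 2) (r := r) (by norm_num) hr
  have h3 : ∀ x ∈ Set.Ioi (0:ℝ), x ^ (1:ℝ) * exp (-r * x ^ (1:ℝ)) = x ^ ((2:ℝ)-1) * exp (-(r * x)) := by
    intro x hx
    rw [rpow_one]
    norm_num
  rw [setIntegral_congr_fun measurableSet_Ioi h3, this]
  rw [Real.Gamma_two]
  rw [show ((2:ℝ)) = ((2:ℕ):ℝ) by norm_num, rpow_natCast]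
  field_simp

lemma expMeasure_Iic {r : ℝ} (hr : 0 < r) (x : ℝ) :
    expMeasure r (Set.Iic x) = ENNReal.ofReal (if 0 ≤ x then 1 - exp (-(r * x)) else 0) := by
  have := isProbabilityMeasure_expMeasure hr
  rw [← ofReal_cdf (expMeasure r) x]
  congr 1
  exact cdf_expMeasure_eq hr x

lemma expMeasure_Ioi {r : ℝ} (hr : 0 < r) (x : ℝ) :
    expMeasure r (Set.Ioi x) = ENNReal.ofReal (exp (-(r * max x 0))) := by
  have := isProbabilityMeasure_expMeasure hr
  rw [show Set.Ioi x = (Set.Iic x)ᶜ from Set.compl_Iic.symm,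
    measure_compl measurableSet_Iic (measure_ne_top _ _), measure_univ, expMeasure_Iic hr]
  by_cases hx : 0 ≤ x
  · have he : exp (-(r * x)) ≤ 1 := exp_le_one_iff.mpr (neg_nonpos.mpr (by positivity))
    rw [if_pos hx, max_eq_left hx, ← ENNReal.ofReal_one,
      ← ENNReal.ofReal_sub _ (by linarith)]
    congr 1
    ring
  · rw [if_neg hx, max_eq_right (le_of_not_ge hx)]
    simp



lemma map_min_exp {Ω ι : Type*} [MeasurableSpace Ω] {μ : Measure Ω} [IsProbabilityMeasure μ]
    {X : ι → Ω → ℝ} (hXmeas : ∀ p, Measurable (X p))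
    (hIndep : iIndepFun X μ)
    {r : ℝ} (hr : 0 < r) {D : ℕ} (hD : 1 ≤ D) (e : Fin D → ι) (he : Function.Injective e)
    (hlaw : ∀ j, Measure.map (X (e j)) μ = expMeasure r) :
    Measure.map (fun ω => ⨅ j, X (e j) ω) μ = expMeasure (D * r) := by
  classical
  haveI : NeZero D := ⟨by omega⟩
  have hDr : (0:ℝ) < (D:ℝ) * r := by
    have : (0:ℝ) < (D:ℝ) := by exact_mod_cast Nat.lt_of_lt_of_le Nat.zero_lt_one hD
    positivity
  set Y : Ω → ℝ := fun ω => ⨅ j, X (e j) ω with hY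
  have hYmeas : Measurable Y := Measurable.iInf fun j => hXmeas _
  haveI := isProbabilityMeasure_expMeasure hDr
  haveI : IsProbabilityMeasure (Measure.map Y μ) := Measure.isProbabilityMeasure_map hYmeas.aemeasurable
  have hIoi : ∀ x : ℝ, Measure.map Y μ (Set.Ioi x) = expMeasure ((D:ℝ) * r) (Set.Ioi x) := by
    intro x
    rw [Measure.map_apply hYmeas measurableSet_Ioi]
    have hset : Y ⁻¹' Set.Ioi x = ⋂ j, X (e j) ⁻¹' Set.Ioi x := by
      ext ω
      simp only [Set.mem_preimage, Set.mem_Ioi, Set.mem_iInter, hY]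
      constructor
      · intro h j
        exact lt_of_lt_of_le h (ciInf_le (Set.finite_range _).bddBelow j)
      · intro h
        obtain ⟨j0, hj0⟩ := exists_eq_ciInf_of_finite (f := fun j => X (e j) ω)
        rw [← hj0]
        exact h j0
    have hmeas_comap : ∀ p ∈ Finset.univ.image e,
        MeasurableSet[(inferInstance : MeasurableSpace ℝ).comap (X p)] (X p ⁻¹' Set.Ioi x) :=
      fun p _ => ⟨Set.Ioi x, measurableSet_Ioi, rfl⟩
    have hprod := hIndep.meas_biInter hmeas_comap
    have h1 : ⋂ p ∈ Finset.univ.image e, X p ⁻¹' Set.Ioi x = ⋂ j, X (e j) ⁻¹' Set.Ioi x := by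
      ext ω
      simp only [Set.mem_iInter, Finset.mem_image, Finset.mem_univ, true_and]
      aesop
    have h2 : ∏ p ∈ Finset.univ.image e, μ (X p ⁻¹' Set.Ioi x) = ∏ j, μ (X (e j) ⁻¹' Set.Ioi x) :=
      Finset.prod_image (fun a _ b _ h => he h)
    have h3 : ∀ j : Fin D, μ (X (e j) ⁻¹' Set.Ioi x) = ENNReal.ofReal (exp (-(r * max x 0))) := by
      intro j
      rw [← Measure.map_apply (hXmeas _) measurableSet_Ioi, hlaw j, expMeasure_Ioi hr]
    rw [hset, ← h1, hprod, h2]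
    simp_rw [h3]
    rw [Finset.prod_const, Finset.card_univ, Fintype.card_fin,
      ← ENNReal.ofReal_pow (exp_nonneg _), ← Real.exp_nat_mul, expMeasure_Ioi hDr]
    congr 2
    ring
  refine Measure.ext_of_Iic _ _ (fun x => ?_)
  have hcompl : Set.Iic x = (Set.Ioi x)ᶜ := Set.compl_Ioi.symm
  rw [hcompl, measure_compl measurableSet_Ioi (measure_ne_top _ _), measure_univ,
    measure_compl measurableSet_Ioi (measure_ne_top _ _), measure_univ, hIoi x]

lemma integrable_of_exp_law {Ω : Type*} [MeasurableSpace Ω] {μ : Measure Ω}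
    {Z : Ω → ℝ} (hZ : Measurable Z) {r : ℝ} (hr : 0 < r)
    (hlaw : Measure.map Z μ = expMeasure r) : Integrable Z μ := by
  have h := (integrable_map_measure (f := Z) (g := fun x : ℝ => x)
    (by rw [hlaw]; exact (exp_integrable' hr).aestronglyMeasurable) hZ.aemeasurable).mp
  rw [hlaw] at h
  exact h (exp_integrable' hr)

lemma mean_of_exp_law {Ω : Type*} [MeasurableSpace Ω] {μ : Measure Ω}
    {Z : Ω → ℝ} (hZ : Measurable Z) {r : ℝ} (hr : 0 < r)
    (hlaw : Measure.map Z μ = expMeasure r) : ∫ ω, Z ω ∂μ = 1 / r := by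
  have h := integral_map (φ := Z) (f := fun x : ℝ => x) hZ.aemeasurable
    (by rw [hlaw]; exact (exp_integrable' hr).aestronglyMeasurable)
  rw [hlaw, exp_mean' hr] at h
  exact h.symm

lemma tendsto_iInf_of_tendsto {D : ℕ} [NeZero D] {S : Fin D → ℕ → ℝ} {L : ℝ}
    (h : ∀ j, Tendsto (S j) atTop (𝓝 L)) :
    Tendsto (fun n => ⨅ j, S j n) atTop (𝓝 L) := by
  refine tendsto_order.2 ⟨fun a ha => ?_, fun a ha => ?_⟩
  · have hev : ∀ᶠ n in atTop, ∀ j, a < S j n :=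
      eventually_all.mpr fun j => (h j).eventually (eventually_gt_nhds ha)
    filter_upwards [hev] with n hn
    obtain ⟨j0, hj0⟩ := exists_eq_ciInf_of_finite (f := fun j => S j n)
    rw [← hj0]; exact hn j0
  · have hev := (h ⟨0, Nat.pos_of_neZero D⟩).eventually (eventually_lt_nhds ha)
    filter_upwards [hev] with n hn
    exact lt_of_le_of_lt (ciInf_le (Set.finite_range _).bddBelow _) hn

lemma iInf_div_nonneg' {D : ℕ} [NeZero D] (a : Fin D → ℝ) {c : ℝ} (hc : 0 ≤ c) :
    (⨅ j, a j) / c = ⨅ j, a j / c := by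
  rcases eq_or_lt_of_le hc with h | h
  · simp [← h, ciInf_const]
  · obtain ⟨j0, hj0⟩ := exists_eq_ciInf_of_finite (f := a)
    refine le_antisymm (le_ciInf fun j => ?_) ?_
    · exact (div_le_div_iff_of_pos_right h).mpr (ciInf_le (Set.finite_range a).bddBelow j)
    · calc ⨅ j, a j / c ≤ a j0 / c := ciInf_le (Set.finite_range _).bddBelow j0
        _ = (⨅ j, a j) / c := by rw [hj0]


theorem asymptotic_speedup_factor
    {Ω : Type*} [MeasurableSpace Ω] (μ : Measure Ω) [IsProbabilityMeasure μ]
    (ρ : ℝ) (hρ : 0 < ρ) (D : ℕ) (hD : 1 ≤ D)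
    (X : ℕ × Fin D → Ω → ℝ) (hXmeas : ∀ p, Measurable (X p))
    (hIndep : iIndepFun X μ)
    (hXlaw : ∀ p, Measure.map (X p) μ = expMeasure (ρ / D))
    (Γ Γstar : ℕ → Ω → ℝ)
    (hΓ : ∀ Θ ω, Γ Θ ω = ⨅ j : Fin D, ∑ i ∈ Finset.range Θ, X (i, j) ω)
    (hΓstar : ∀ Θ ω, Γstar Θ ω = ∑ i ∈ Finset.range Θ, ⨅ j : Fin D, X (i, j) ω) :
    ∀ᵐ ω ∂μ, Tendsto (fun Θ : ℕ => Γstar Θ ω / Γ Θ ω) atTop (nhds (1 / D)) := by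
  classical
  haveI : NeZero D := ⟨by omega⟩
  have hD0 : (0:ℝ) < D := by exact_mod_cast Nat.lt_of_lt_of_le Nat.zero_lt_one hD
  have hρD : 0 < ρ / D := div_pos hρ hD0
  -- column strong law
  have hcol : ∀ j : Fin D, ∀ᵐ ω ∂μ,
      Tendsto (fun n : ℕ => (∑ i ∈ Finset.range n, X (i, j) ω) / n) atTop (𝓝 ((D:ℝ) / ρ)) := by
    intro j
    have hint : Integrable (X (0, j)) μ := integrable_of_exp_law (hXmeas _) hρD (hXlaw _)
    have hindep : Pairwise (Function.onFun (IndepFun · · μ) fun n : ℕ => X (n, j)) := by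
      intro n m hnm
      exact hIndep.indepFun (by simp [Prod.ext_iff, hnm])
    have hident : ∀ i : ℕ, IdentDistrib (X (i, j)) (X (0, j)) μ μ :=
      fun i => ⟨(hXmeas _).aemeasurable, (hXmeas _).aemeasurable, by rw [hXlaw, hXlaw]⟩
    have h := strong_law_ae_real (fun n : ℕ => X (n, j)) hint hindep hident
    have hmean : μ[X (0, j)] = (D:ℝ) / ρ := by
      rw [mean_of_exp_law (hXmeas _) hρD (hXlaw _), one_div_div]
    rwa [hmean] at h
  -- min sequence
  set Y : ℕ → Ω → ℝ := fun i ω => ⨅ j : Fin D, X (i, j) ω with hYdef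
  have hYmeas : ∀ i, Measurable (Y i) := fun i => Measurable.iInf fun j => hXmeas _
  have hYlaw : ∀ i, Measure.map (Y i) μ = expMeasure ρ := by
    intro i
    have he : Function.Injective (fun j : Fin D => ((i, j) : ℕ × Fin D)) := by
      intro a b hab; simpa [Prod.ext_iff] using hab
    have h := map_min_exp hXmeas hIndep hρD hD (fun j => (i, j)) he (fun j => hXlaw _)
    rwa [mul_div_cancel₀ ρ (ne_of_gt hD0)] at h
  have hYint : Integrable (Y 0) μ := integrable_of_exp_law (hYmeas 0) hρ (hYlaw 0)
  have hYindep : Pairwise (Function.onFun (IndepFun · · μ) Y) := by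
    intro i k hik
    set S : Finset (ℕ × Fin D) := Finset.univ.image fun j => (i, j) with hS
    set T : Finset (ℕ × Fin D) := Finset.univ.image fun j => (k, j) with hT
    have hST : Disjoint S T := by
      rw [Finset.disjoint_left]
      rintro p hp hq
      simp only [hS, hT, Finset.mem_image, Finset.mem_univ, true_and] at hp hq
      obtain ⟨a, rfl⟩ := hp
      obtain ⟨b, hb⟩ := hq
      have : k = i := (Prod.ext_iff.mp hb).1
      exact hik this.symm
    have hbase := hIndep.indepFun_finset S T hST hXmeas
    have hmemS : ∀ j : Fin D, ((i, j) : ℕ × Fin D) ∈ S := fun j => by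
      simp [hS]
    have hmemT : ∀ j : Fin D, ((k, j) : ℕ × Fin D) ∈ T := fun j => by
      simp [hT]
    have mφ : Measurable (fun v : (p : S) → ℝ => ⨅ j : Fin D, v ⟨(i, j), hmemS j⟩) :=
      Measurable.iInf fun j => measurable_pi_apply _
    have mψ : Measurable (fun v : (p : T) → ℝ => ⨅ j : Fin D, v ⟨(k, j), hmemT j⟩) :=
      Measurable.iInf fun j => measurable_pi_apply _
    exact hbase.comp mφ mψ
  have hYident : ∀ i : ℕ, IdentDistrib (Y i) (Y 0) μ μ :=
    fun i => ⟨(hYmeas _).aemeasurable, (hYmeas _).aemeasurable, by rw [hYlaw, hYlaw]⟩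
  have hYslln := strong_law_ae_real Y hYint hYindep hYident
  have hYmean : μ[Y 0] = 1 / ρ := mean_of_exp_law (hYmeas 0) hρ (hYlaw 0)
  rw [hYmean] at hYslln
  -- combine
  filter_upwards [ae_all_iff.mpr hcol, hYslln] with ω hcolω hYω
  have hG : Tendsto (fun n : ℕ => Γ n ω / n) atTop (𝓝 ((D:ℝ) / ρ)) := by
    refine (tendsto_iInf_of_tendsto (S := fun j n => (∑ i ∈ Finset.range n, X (i, j) ω) / n)
      hcolω).congr fun n => ?_
    rw [hΓ, iInf_div_nonneg' _ (Nat.cast_nonneg n)]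
  have hGs : Tendsto (fun n : ℕ => Γstar n ω / n) atTop (𝓝 (1 / ρ)) := by
    refine hYω.congr fun n => ?_
    rw [hΓstar]
  have hdiv := hGs.div hG (by positivity)
  have heq : ∀ᶠ n : ℕ in atTop, (Γstar n ω / n) / (Γ n ω / n) = Γstar n ω / Γ n ω := by
    filter_upwards [eventually_ge_atTop 1] with n hn
    have hn' : (n:ℝ) ≠ 0 := by
      have : (0:ℝ) < n := by exact_mod_cast hn
      exact ne_of_gt this
    rcases eq_or_ne (Γ n ω) 0 with h | h
    · simp [h]
    · field_simp
  have hfin : Tendsto (fun n : ℕ => Γstar n ω / Γ n ω) atTop (𝓝 ((1/ρ) / ((D:ℝ)/ρ))) :=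
    hdiv.congr' heq
  have hval : (1/ρ) / ((D:ℝ)/ρ) = 1 / D := by
    field_simp
  rwa [hval] at hfin
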